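/- Fix t ≥ 1, ρ ∈ [0,1], a symmetric positive definite d×d real matrix Σ0, and 0 ≤ k ≤ t−1. For 1 ≤ i ≤ t define U_i^ρ = √(α_i) ( Σ_{i−1} + (1/2) ρ (β_i/α_i) I ) Σ_i^{-1}. Then the product U_{k+1}^ρ U_{k+2}^ρ ⋯ U_t^ρ equals ( ∏_{i=k+1}^{t} √(α_i) ) ( Σ_k + (1/2) ρ (β_{k+1}/α_{k+1}) I ) ( ∏_{i=k+1}^{t−1} ( I + (1/2) ρ (β_{i+1}/α_{i+1}) Σ_i^{-1} ) ) Σ_t^{-1}. -/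

import Mathlib

open Matrix

lemma aux_posDef {d : ℕ} (S0 : Matrix (Fin d) (Fin d) ℝ) (hS0 : S0.PosDef)
    (a b : ℝ) (ha : 0 < a) (hb : 0 ≤ b) :
    (a • S0 + b • (1 : Matrix (Fin d) (Fin d) ℝ)).PosDef := by
  apply Matrix.PosDef.add_posSemidef
  · refine ⟨?_, fun x hx => ?_⟩
    · show _ = _
      rw [conjTranspose_smul, hS0.1.eq]; simp
    · exact (hS0.smul ha).2 hx
  · refine ⟨?_, fun x => ?_⟩
    · show _ = _
      rw [conjTranspose_smul, conjTranspose_one]; simp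
    · exact ((Matrix.PosSemidef.one).smul hb).2 x

/-- Closed form of the ordered product of the transition matrices
`U_{k+1}^ρ U_{k+2}^ρ ⋯ U_t^ρ` of the score-scaled PF-ODE. -/
theorem stmt_1 (d t : ℕ) (hd : 1 ≤ d) (ht : 1 ≤ t)
    (ρ : ℝ) (hρ : ρ ∈ Set.Icc (0:ℝ) 1)
    (β : ℕ → ℝ) (hβ : ∀ i, 1 ≤ i → i ≤ t → β i ∈ Set.Ioo (0:ℝ) 1)
    (al : ℕ → ℝ) (hal : ∀ i, al i = 1 - β i)
    (alb : ℕ → ℝ) (halb : ∀ i, alb i = ∏ j ∈ Finset.Icc 1 i, al j)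
    (S0 : Matrix (Fin d) (Fin d) ℝ) (hS0 : S0.PosDef)
    (S : ℕ → Matrix (Fin d) (Fin d) ℝ)
    (hS : ∀ i, S i = alb i • S0 + (1 - alb i) • (1 : Matrix (Fin d) (Fin d) ℝ))
    (U : ℕ → Matrix (Fin d) (Fin d) ℝ)
    (hU : ∀ i, 1 ≤ i → i ≤ t →
      U i = Real.sqrt (al i) •
        ((S (i-1) + ((1/2) * ρ * (β i / al i)) • (1 : Matrix (Fin d) (Fin d) ℝ)) * (S i)⁻¹))
    (k : ℕ) (hk : k < t) :
    ((List.range (t - k)).map (fun j => U (k + 1 + j))).prod =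
      (∏ i ∈ Finset.Icc (k+1) t, Real.sqrt (al i)) •
        ((S k + ((1/2) * ρ * (β (k+1) / al (k+1))) • (1 : Matrix (Fin d) (Fin d) ℝ)) *
          ((List.range (t - 1 - k)).map (fun j =>
            (1 : Matrix (Fin d) (Fin d) ℝ) +
              ((1/2) * ρ * (β (k+1+j+1) / al (k+1+j+1))) • (S (k+1+j))⁻¹)).prod *
          (S t)⁻¹) := by
  -- positivity facts
  have halb_pos : ∀ i, i ≤ t → 0 < alb i := by
    intro i hi
    rw [halb]
    apply Finset.prod_pos
    intro j hj
    rw [Finset.mem_Icc] at hj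
    rw [hal]
    have := hβ j hj.1 (le_trans hj.2 hi)
    linarith [this.2]
  have halb_le : ∀ i, i ≤ t → alb i ≤ 1 := by
    intro i hi
    rw [halb]
    apply Finset.prod_le_one
    · intro j hj
      rw [Finset.mem_Icc] at hj
      rw [hal]
      have := hβ j hj.1 (le_trans hj.2 hi)
      linarith [this.2]
    · intro j hj
      rw [Finset.mem_Icc] at hj
      rw [hal]
      have := hβ j hj.1 (le_trans hj.2 hi)
      linarith [this.1]
  have hSpd : ∀ i, i ≤ t → (S i).PosDef := by
    intro i hi
    rw [hS]
    exact aux_posDef S0 hS0 _ _ (halb_pos i hi) (by linarith [halb_le i hi])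
  have hSinv : ∀ i, i ≤ t → (S i)⁻¹ * S i = 1 := by
    intro i hi
    exact Matrix.nonsing_inv_mul _ ((Matrix.isUnit_iff_isUnit_det _).1 (hSpd i hi).isUnit)
  -- main induction
  suffices H : ∀ m k, k < t → t - k = m →
      ((List.range (t - k)).map (fun j => U (k + 1 + j))).prod =
      (∏ i ∈ Finset.Icc (k+1) t, Real.sqrt (al i)) •
        ((S k + ((1/2) * ρ * (β (k+1) / al (k+1))) • (1 : Matrix (Fin d) (Fin d) ℝ)) *
          ((List.range (t - 1 - k)).map (fun j =>
            (1 : Matrix (Fin d) (Fin d) ℝ) +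
              ((1/2) * ρ * (β (k+1+j+1) / al (k+1+j+1))) • (S (k+1+j))⁻¹)).prod *
          (S t)⁻¹) by
    exact H (t - k) k hk rfl
  intro m
  induction m with
  | zero => intro k hk hm; omega
  | succ m ih =>
    intro k hk hm
    match m, ih with
    | 0, _ =>
      -- base case : t = k + 1
      have htk : t = k + 1 := by omega
      subst htk
      have h1 : k + 1 - k = 1 := by omega
      have h2 : k + 1 - 1 - k = 0 := by omega
      rw [h1, h2, show List.range 1 = [0] from rfl]
      simp only [List.map_cons, List.map_nil, List.prod_cons, List.prod_nil,
        List.range_zero, mul_one, Nat.add_zero]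
      rw [hU (k+1) (by omega) (by omega)]
      simp only [Nat.add_sub_cancel, Finset.Icc_self, Finset.prod_singleton]
    | m + 1, ih =>
      have hk1 : k + 1 < t := by omega
      have hm' : t - (k+1) = m + 1 := by omega
      -- split off the first factor on the LHS
      have hrange : t - k = (m + 1) + 1 := by omega
      rw [hrange, List.range_succ_eq_map, List.map_cons, List.prod_cons, List.map_map]
      have hcomp : ((fun j => U (k + 1 + j)) ∘ Nat.succ) = fun j => U (k + 1 + 1 + j) := by
        funext j
        have h : k + 1 + Nat.succ j = k + 1 + 1 + j := by omega
        simp [Function.comp, h]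
      rw [hcomp]
      have hIH := ih (k+1) hk1 hm'
      rw [hm'] at hIH
      rw [hIH]
      -- split off the head of the RHS list
      have hr2 : t - 1 - k = (t - 1 - (k+1)) + 1 := by omega
      rw [hr2, List.range_succ_eq_map, List.map_cons, List.prod_cons, List.map_map]
      have hcomp2 : ((fun j =>
            (1 : Matrix (Fin d) (Fin d) ℝ) +
              ((1/2) * ρ * (β (k+1+j+1) / al (k+1+j+1))) • (S (k+1+j))⁻¹) ∘ Nat.succ)
          = fun j => (1 : Matrix (Fin d) (Fin d) ℝ) +
              ((1/2) * ρ * (β (k+1+1+j+1) / al (k+1+1+j+1))) • (S (k+1+1+j))⁻¹ := by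
        funext j
        have h : k + 1 + Nat.succ j = k + 1 + 1 + j := by omega
        simp [Function.comp, h]
      rw [hcomp2]
      -- split the scalar product
      have hset : Finset.Icc (k+1) t = insert (k+1) (Finset.Icc (k+1+1) t) := by
        ext x
        simp only [Finset.mem_Icc, Finset.mem_insert]
        omega
      rw [hset, Finset.prod_insert (by simp)]
      -- unfold U (k+1)
      rw [hU (k+1) (by omega) (by omega)]
      have hk1k : k + 1 - 1 = k := by omega
      rw [hk1k]
      -- set up abbreviations
      set c1 : ℝ := (1/2) * ρ * (β (k+1) / al (k+1)) with hc1
      set c2 : ℝ := (1/2) * ρ * (β (k+1+1) / al (k+1+1)) with hc2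
      set A1 := S k + c1 • (1 : Matrix (Fin d) (Fin d) ℝ) with hA1
      set A2 := S (k+1) + c2 • (1 : Matrix (Fin d) (Fin d) ℝ) with hA2
      set P := ((List.range (t - 1 - (k+1))).map (fun j =>
            (1 : Matrix (Fin d) (Fin d) ℝ) +
              ((1/2) * ρ * (β (k+1+1+j+1) / al (k+1+1+j+1))) • (S (k+1+1+j))⁻¹)).prod with hP
      -- key inverse identity
      have hkey : (S (k+1))⁻¹ * A2 = (1 : Matrix (Fin d) (Fin d) ℝ) + c2 • (S (k+1))⁻¹ := by
        rw [hA2, mul_add, hSinv (k+1) (by omega), mul_smul_comm, mul_one]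
      rw [smul_mul_assoc, mul_smul_comm, smul_smul]
      congr 1
      simp only [mul_assoc]
      rw [← mul_assoc ((S (k+1))⁻¹) A2, hkey]
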